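/- q-vanishing property: fix 0 < q < 1, a subset J = {j_1, ..., j_ℓ} ⊂ {0, ..., N-1} with ℓ < N, and ν ∈ GT_N. Define ψ^J_i(x) = ∑_{j=1}^N h_{ν_j - j - x}(q^{j_1}, ..., q^{j_ℓ}) · [V(q^{ν_N - N}, ..., q^{ν_1 - 1})^{-1}]_{ij}, where h_m is the complete homogeneous symmetric polynomial (zero for m < 0) and V is the Vandermonde matrix with the indicated nodes. Then for any i = 1, ..., N and any integer x ≤ ν_N - N + ℓ - 1: ψ^J_i(x) = 0 if N - i ∉ J, and ψ^J_i(x) = q^{-x(N-i)} ∏_{r ∈ J, r ≠ N-i} (1 - q^{r - N + i})^{-1} if N - i ∈ J. -/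

import Mathlib

open Finset

/-- The complete homogeneous symmetric polynomial `h_m` of degree `m` in the
variables `a : α → ℝ`. -/
noncomputable def hcomplete {α : Type*} [Fintype α] [DecidableEq α] (m : ℕ) (a : α → ℝ) : ℝ :=
  ∑ s : Sym α m, ((s : Multiset α).map a).prod

/-- `h_d` with an integer degree: zero for `d < 0`. -/
noncomputable def hcompleteInt {α : Type*} [Fintype α] [DecidableEq α] (d : ℤ) (a : α → ℝ) : ℝ :=
  if d < 0 then 0 else hcomplete d.toNat a

/-- The Vandermonde matrix with the distinct nodes `q^{ν_j - j}`, `j = 1, …, N`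
(for `0 < q < 1` these are distinct positive reals). -/
noncomputable def qNuVandermonde (N : ℕ) (ν : Fin N → ℤ) (q : ℝ) : Matrix (Fin N) (Fin N) ℝ :=
  Matrix.of fun i j : Fin N => (q ^ (ν i - ((i : ℕ) + 1) : ℤ)) ^ (N - 1 - (j : ℕ))

/-- `ψ^J_i(x) = ∑_{j=1}^N h_{ν_j - j - x}(q^{j_1},…,q^{j_ℓ}) · [V⁻¹]_{ij}`, where `h_m`
is the complete homogeneous symmetric polynomial (zero for `m < 0`). -/
noncomputable def qPsiFun (N : ℕ) (ν : Fin N → ℤ) (q : ℝ) (J : Finset ℕ) (x : ℤ)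
    (i : Fin N) : ℝ :=
  ∑ j : Fin N,
    hcompleteInt (ν j - ((j : ℕ) + 1) - x) (fun r : {r // r ∈ J} => q ^ (r : ℕ)) *
      (qNuVandermonde N ν q)⁻¹ i j

lemma hcomplete_zero {α : Type*} [Fintype α] [DecidableEq α] (a : α → ℝ) :
    hcomplete 0 a = 1 := by
  simp [hcomplete, Sym.eq_nil_of_card_zero]

lemma hcomplete_isEmpty {α : Type*} [Fintype α] [DecidableEq α] [IsEmpty α] (a : α → ℝ)
    (n : ℕ) (hn : n ≠ 0) : hcomplete n a = 0 := by
  obtain ⟨k, rfl⟩ := Nat.exists_eq_succ_of_ne_zero hn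
  rw [hcomplete]
  exact Finset.sum_of_isEmpty _

lemma hcomplete_equiv {α β : Type*} [Fintype α] [DecidableEq α] [Fintype β] [DecidableEq β]
    (e : α ≃ β) (a : β → ℝ) (n : ℕ) : hcomplete n (a ∘ e) = hcomplete n a := by
  rw [hcomplete, hcomplete]
  refine Fintype.sum_equiv (Sym.equivCongr e) _ _ fun s => ?_
  simp [Sym.equivCongr, Sym.coe_map, Multiset.map_map, Function.comp_def]

lemma hcomplete_succ {α : Type*} [Fintype α] [DecidableEq α] (a : α → ℝ) (t : α) (n : ℕ) :
    hcomplete (n+1) a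
      = a t * hcomplete n a + hcomplete (n+1) (fun x : {x : α // x ≠ t} => a x) := by
  classical
  rw [hcomplete,
    ← Finset.sum_filter_add_sum_filter_not univ (fun s : Sym α (n+1) => t ∈ s)]
  congr 1
  · rw [hcomplete, Finset.mul_sum]
    refine Finset.sum_bij'
      (fun s hs => (⟨(s : Multiset α).erase t, by
        rw [Multiset.card_erase_of_mem (by simpa using (Finset.mem_filter.mp hs).2),
          Sym.card_coe]
        rfl⟩ : Sym α n))
      (fun s' _ => t ::ₛ s') (fun s hs => Finset.mem_univ _)
      (fun s' _ => by simp [Sym.mem_cons]) ?_ ?_ ?_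
    · intro s hs
      have ht : t ∈ (s : Multiset α) := by simpa using (Finset.mem_filter.mp hs).2
      apply Sym.coe_injective
      exact Multiset.cons_erase ht
    · intro s' _
      apply Sym.coe_injective
      simp [Sym.coe_cons, Multiset.erase_cons_head]
    · intro s hs
      have ht : t ∈ (s : Multiset α) := by simpa using (Finset.mem_filter.mp hs).2
      conv_lhs => rw [← Multiset.cons_erase ht]
      simp
  · rw [hcomplete]
    refine Finset.sum_bij'
      (fun s hs => (⟨((s : Multiset α)).attach.map
          (fun x => (⟨x.1, by
            have : t ∉ (s : Multiset α) := by simpa using (Finset.mem_filter.mp hs).2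
            rintro rfl; exact this x.2⟩ : {x : α // x ≠ t})), by
        simp [s.2]⟩ : Sym {x : α // x ≠ t} (n+1)))
      (fun s' _ => s'.map Subtype.val)
      (fun s hs => Finset.mem_univ _)
      (fun s' _ => by
        simp only [Finset.mem_filter, Finset.mem_univ, true_and, Sym.mem_map]
        rintro ⟨⟨x, hx⟩, -, h⟩
        exact hx h)
      ?_ ?_ ?_
    · intro s hs
      apply Sym.coe_injective
      simp [Sym.coe_map, Multiset.map_map, Function.comp_def]
    · intro s' _
      apply Sym.coe_injective
      apply Multiset.map_injective (Subtype.val_injective)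
      simp [Sym.coe_map, Multiset.map_map, Function.comp_def]
    · intro s hs
      simp [Multiset.map_map, Function.comp_def]

lemma hcompleteInt_rec {α : Type*} [Fintype α] [DecidableEq α] (a : α → ℝ) (t : α) (d : ℤ) :
    hcompleteInt d a
      = a t * hcompleteInt (d-1) a + hcompleteInt d (fun x : {x : α // x ≠ t} => a x) := by
  rcases lt_trichotomy d 0 with h | h | h
  · rw [hcompleteInt, if_pos h, hcompleteInt, if_pos (by omega), hcompleteInt, if_pos h]
    ring
  · subst h
    rw [hcompleteInt, if_neg (by omega), hcompleteInt, if_pos (by omega),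
      hcompleteInt, if_neg (by omega)]
    simp [hcomplete_zero]
  · rw [hcompleteInt, if_neg (by omega), hcompleteInt, if_neg (by omega),
      hcompleteInt, if_neg (by omega)]
    have hd : d.toNat = (d-1).toNat + 1 := by omega
    rw [hd, hcomplete_succ a t]

lemma hcompleteInt_equiv {α β : Type*} [Fintype α] [DecidableEq α] [Fintype β] [DecidableEq β]
    (e : α ≃ β) (a : β → ℝ) (d : ℤ) : hcompleteInt d (a ∘ e) = hcompleteInt d a := by
  rw [hcompleteInt, hcompleteInt]
  split_ifs with h
  · rfl
  · exact hcomplete_equiv e a _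

def insertEquiv (t : ℕ) (S : Finset ℕ) (ht : t ∉ S) :
    {x : {r // r ∈ insert t S} // x ≠ (⟨t, Finset.mem_insert_self t S⟩ :
      {r // r ∈ insert t S})} ≃ {r // r ∈ S} where
  toFun := fun x => ⟨x.1.1, by
    rcases Finset.mem_insert.mp x.1.2 with h | h
    · exact absurd (Subtype.ext h) x.2
    · exact h⟩
  invFun := fun r => ⟨⟨r.1, Finset.mem_insert_of_mem r.2⟩, by
    intro h
    apply ht
    have h2 : (r : ℕ) = t := congrArg Subtype.val h
    rw [← h2]
    exact r.2⟩
  left_inv := fun x => by ext; rfl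
  right_inv := fun r => rfl

lemma hcompleteInt_insert (a : ℕ → ℝ) {t : ℕ} {S : Finset ℕ} (ht : t ∉ S) (d : ℤ) :
    hcompleteInt d (fun r : {r // r ∈ insert t S} => a r) =
      a t * hcompleteInt (d-1) (fun r : {r // r ∈ insert t S} => a r) +
      hcompleteInt d (fun r : {r // r ∈ S} => a r) := by
  rw [hcompleteInt_rec _ (⟨t, Finset.mem_insert_self t S⟩ : {r // r ∈ insert t S})]
  congr 1
  rw [← hcompleteInt_equiv (insertEquiv t S ht) (fun r : {r // r ∈ S} => a r) d]
  rfl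

open Polynomial in
lemma leadingCoeff_basisDivisor {x y : ℝ} :
    (Lagrange.basisDivisor x y).leadingCoeff = (x - y)⁻¹ := by
  rw [Lagrange.basisDivisor, leadingCoeff_mul, leadingCoeff_C, (monic_X_sub_C y).leadingCoeff,
    mul_one]

open Polynomial in
lemma lagrange_leading_sum_zero {v : ℕ → ℝ} {s : Finset ℕ} (hvs : Set.InjOn v s)
    (h2 : 2 ≤ s.card) : ∑ i ∈ s, ∏ j ∈ s.erase i, (v i - v j)⁻¹ = 0 := by
  have hs : s.Nonempty := Finset.card_pos.mp (by omega)
  have h := Lagrange.sum_basis hvs hs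
  have h2' := congrArg (fun p : ℝ[X] => p.coeff (s.card - 1)) h
  simp only [finset_sum_coeff] at h2'
  rw [coeff_one] at h2'
  have hne : (s.card - 1 : ℕ) ≠ 0 := by omega
  rw [if_neg (by omega)] at h2'
  rw [← h2']
  apply Finset.sum_congr rfl
  intro i hi
  have hnd := Lagrange.natDegree_basis hvs hi
  have : (Lagrange.basis s v i).coeff (s.card - 1) = (Lagrange.basis s v i).leadingCoeff := by
    rw [Polynomial.leadingCoeff, hnd]
  rw [this, Lagrange.basis, leadingCoeff_prod]
  exact Finset.prod_congr rfl fun j hj => leadingCoeff_basisDivisor.symm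

lemma one_sub_q_ne {q : ℝ} (hq : 0 < q) (hq1 : q < 1) {z : ℤ} (hz : z ≠ 0) :
    (1 : ℝ) - q ^ z ≠ 0 := by
  intro h
  have h1 : q ^ z = 1 := by linarith
  have := zpow_right_injective₀ hq (ne_of_lt hq1) (h1.trans (zpow_zero q).symm)
  exact hz this

lemma q_pow_factor {q : ℝ} (hq : 0 < q) (s r : ℕ) :
    (q : ℝ) ^ (s : ℕ) * q ^ ((r : ℤ) - (s : ℤ)) = q ^ (r : ℕ) := by
  rw [← zpow_natCast q s, ← zpow_add₀ (ne_of_gt hq), ← zpow_natCast q r]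
  ring_nf

lemma keyIdentity {q : ℝ} (hq : 0 < q) (hq1 : q < 1) (J : Finset ℕ) :
    ∀ m : ℤ, 1 ≤ m + J.card →
      hcompleteInt m (fun r : {r // r ∈ J} => q ^ (r : ℕ)) =
      ∑ s ∈ J, ((q : ℝ) ^ (s : ℕ)) ^ m * ∏ r ∈ J.erase s, (1 - q ^ ((r : ℤ) - (s : ℤ)))⁻¹ := by
  classical
  have hqne : q ≠ 0 := ne_of_gt hq
  induction J using Finset.induction_on with
  | empty =>
    intro m hm
    simp only [Finset.card_empty, Nat.cast_zero, add_zero] at hm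
    rw [Finset.sum_empty, hcompleteInt, if_neg (by omega)]
    have : IsEmpty {r : ℕ // r ∈ (∅ : Finset ℕ)} := by
      constructor; rintro ⟨r, hr⟩; simp at hr
    exact hcomplete_isEmpty _ _ (by omega)
  | @insert t S ht IH =>
    have hstep : ∀ m : ℤ, 0 ≤ m + (S.card : ℤ) →
        (hcompleteInt m (fun r : {r // r ∈ insert t S} => q ^ (r : ℕ)) =
          ∑ s ∈ insert t S, ((q : ℝ) ^ (s : ℕ)) ^ m *
            ∏ r ∈ (insert t S).erase s, (1 - q ^ ((r : ℤ) - (s : ℤ)))⁻¹) →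
        (hcompleteInt (m+1) (fun r : {r // r ∈ insert t S} => q ^ (r : ℕ)) =
          ∑ s ∈ insert t S, ((q : ℝ) ^ (s : ℕ)) ^ (m+1) *
            ∏ r ∈ (insert t S).erase s, (1 - q ^ ((r : ℤ) - (s : ℤ)))⁻¹) := by
      intro m hm Pm
      rw [hcompleteInt_insert _ ht (m+1), add_sub_cancel_right, Pm,
        IH (m+1) (by push_cast; omega)]
      rw [Finset.sum_insert ht, Finset.sum_insert ht, mul_add,
        zpow_add_one₀ (ne_of_gt (pow_pos hq t)), Finset.mul_sum]
      have hterm : ∀ s ∈ S,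
          q ^ (t : ℕ) * (((q:ℝ) ^ (s:ℕ)) ^ m * ∏ r ∈ (insert t S).erase s,
              (1 - q ^ ((r:ℤ) - (s:ℤ)))⁻¹)
            + ((q:ℝ) ^ (s:ℕ)) ^ (m+1) * ∏ r ∈ S.erase s, (1 - q ^ ((r:ℤ) - (s:ℤ)))⁻¹
          = ((q:ℝ) ^ (s:ℕ)) ^ (m+1) * ∏ r ∈ (insert t S).erase s,
              (1 - q ^ ((r:ℤ) - (s:ℤ)))⁻¹ := by
        intro s hs
        have hst : s ≠ t := by rintro rfl; exact ht hs
        have herase : (insert t S).erase s = insert t (S.erase s) :=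
          Finset.erase_insert_of_ne (Ne.symm hst)
        have htS : t ∉ S.erase s := fun h => ht (Finset.mem_of_mem_erase h)
        rw [herase, Finset.prod_insert htS]
        set C := ∏ r ∈ S.erase s, (1 - q ^ ((r:ℤ) - (s:ℤ)))⁻¹ with hC
        have hw : (1 : ℝ) - q ^ ((t:ℤ) - (s:ℤ)) ≠ 0 :=
          one_sub_q_ne hq hq1 (by omega)
        have hkey : (q : ℝ) ^ (t : ℕ) = q ^ (s : ℕ) * q ^ ((t:ℤ) - (s:ℤ)) :=
          (q_pow_factor hq s t).symm
        rw [hkey, zpow_add_one₀ (ne_of_gt (pow_pos hq s))]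
        field_simp
        ring
      have hsum := Finset.sum_congr rfl hterm
      rw [Finset.sum_add_distrib] at hsum
      linear_combination hsum
    intro m hm
    rw [Finset.card_insert_of_notMem ht] at hm
    push_cast at hm
    -- m ≥ -S.card ; induction via Int.le_induction
    have hbase : hcompleteInt (-(S.card : ℤ))
          (fun r : {r // r ∈ insert t S} => q ^ (r : ℕ)) =
        ∑ s ∈ insert t S, ((q : ℝ) ^ (s : ℕ)) ^ (-(S.card : ℤ)) *
          ∏ r ∈ (insert t S).erase s, (1 - q ^ ((r : ℤ) - (s : ℤ)))⁻¹ := by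
      rcases S.eq_empty_or_nonempty with rfl | hS
      · simp only [Finset.card_empty, Nat.cast_zero, neg_zero]
        rw [hcompleteInt, if_neg (by omega)]
        simp [hcomplete_zero]
        exact hcomplete_zero _
      · have hSpos : 0 < S.card := Finset.card_pos.mpr hS
        have hJ2 : 2 ≤ (insert t S).card := by
          rw [Finset.card_insert_of_notMem ht]; omega
        have hinj : Set.InjOn (fun r : ℕ => (q:ℝ) ^ r) ((insert t S : Finset ℕ) : Set ℕ) := by
          intro a _ b _ hab
          have : ((a:ℕ) : ℤ) = (b : ℤ) := by
            apply zpow_right_injective₀ hq (ne_of_lt hq1)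
            simp only [zpow_natCast]
            exact hab
          exact_mod_cast this
        have h0 := lagrange_leading_sum_zero hinj hJ2
        rw [hcompleteInt, if_pos (by omega), ← h0]
        apply Finset.sum_congr rfl
        intro s hs
        have hcard : ((insert t S).erase s).card = S.card := by
          rw [Finset.card_erase_of_mem hs, Finset.card_insert_of_notMem ht]
          omega
        have hconst : ((q:ℝ) ^ (s:ℕ)) ^ (-(S.card : ℤ)) =
            ∏ _r ∈ (insert t S).erase s, ((q:ℝ) ^ (s:ℕ))⁻¹ := by
          rw [Finset.prod_const, hcard, zpow_neg, ← inv_zpow, zpow_natCast]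
        rw [hconst, ← Finset.prod_mul_distrib]
        apply Finset.prod_congr rfl
        intro r hr
        have hrne : r ≠ s := (Finset.mem_erase.mp hr).1
        show ((q:ℝ) ^ (s:ℕ) - q ^ (r:ℕ))⁻¹
          = ((q:ℝ) ^ (s:ℕ))⁻¹ * (1 - q ^ ((r:ℤ) - (s:ℤ)))⁻¹
        rw [← mul_inv]
        congr 1
        rw [mul_sub, mul_one, q_pow_factor hq s r]
    exact Int.le_induction hbase (fun n hn IH2 => hstep n (by omega) IH2) m (by omega)

/-- **q-vanishing property.**
Fix `0 < q < 1`, `J = {j_1, …, j_ℓ} ⊆ {0, …, N-1}` with `ℓ < N`, and `ν ∈ GT_N`.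
Then for any `i = 1, …, N` and any integer `x ≤ ν_N - N + ℓ - 1`:
`ψ^J_i(x) = 0` if `N - i ∉ J`, and
`ψ^J_i(x) = q^{-x(N-i)} ∏_{r ∈ J, r ≠ N-i} (1 - q^{r-N+i})⁻¹` if `N - i ∈ J`. -/
theorem qPsi_vanishing (N : ℕ) (hN : 0 < N) (q : ℝ) (hq : 0 < q) (hq1 : q < 1)
    (J : Finset ℕ) (hJ : J ⊆ Finset.range N) (hJcard : J.card < N)
    (ν : Fin N → ℤ) (hν : Antitone ν)
    (x : ℤ) (hx : x ≤ ν ⟨N - 1, by omega⟩ - N + J.card - 1) (i : Fin N) :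
    (N - 1 - (i : ℕ) ∉ J → qPsiFun N ν q J x i = 0) ∧
    (N - 1 - (i : ℕ) ∈ J →
      qPsiFun N ν q J x i =
        q ^ (-(x * (N - 1 - (i : ℕ) : ℤ))) *
          ∏ r ∈ J.erase (N - 1 - (i : ℕ)),
            (1 - q ^ ((r : ℤ) - (N - 1 - (i : ℕ) : ℤ)))⁻¹) := by
  classical
  have hqne : q ≠ 0 := ne_of_gt hq
  set e : Fin N → ℤ := fun k => ν k - ((k : ℕ) + 1) with he
  set a : Fin N → ℝ := fun k => q ^ (e k) with ha
  set V : Matrix (Fin N) (Fin N) ℝ := qNuVandermonde N ν q with hV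
  have hainj : Function.Injective a := by
    intro k l h
    have hekl : e k = e l := zpow_right_injective₀ hq (ne_of_lt hq1) h
    by_contra hkl
    rcases Nat.lt_or_ge (k : ℕ) (l : ℕ) with hlt | hge
    · have := hν (le_of_lt (show k < l from hlt))
      simp only [he] at hekl; omega
    · have hlk : (l : ℕ) < (k : ℕ) := by
        rcases Nat.lt_or_ge (l : ℕ) (k : ℕ) with h' | h'
        · exact h'
        · exact absurd (Fin.ext (le_antisymm h' hge)) hkl
      have := hν (le_of_lt (show l < k from hlk))
      simp only [he] at hekl; omega
  have hsub : V.submatrix id Fin.revPerm = Matrix.vandermonde a := by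
    ext k j
    simp only [Matrix.submatrix_apply, id_eq, hV, qNuVandermonde, Matrix.of_apply,
      Matrix.vandermonde_apply, Fin.revPerm_apply]
    have : N - 1 - ((Fin.rev j : Fin N) : ℕ) = (j : ℕ) := by
      rw [Fin.val_rev]
      have := j.isLt
      omega
    rw [this]
  have hdet : V.det ≠ 0 := by
    have hvd : (Matrix.vandermonde a).det ≠ 0 := Matrix.det_vandermonde_ne_zero_iff.mpr hainj
    rw [← hsub, Matrix.det_permute'] at hvd
    intro h0
    rw [h0, mul_zero] at hvd
    exact hvd rfl
  set tval : ℕ → ℝ := fun s => if s ∈ J then q ^ (-(x * (s : ℤ))) *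
      ∏ r ∈ J.erase s, (1 - q ^ ((r : ℤ) - (s : ℤ)))⁻¹ else 0 with htval
  set tvec : Fin N → ℝ := fun j => tval (N - 1 - (j : ℕ)) with htvec
  have hmul : V.mulVec tvec = fun k =>
      hcompleteInt (ν k - ((k : ℕ) + 1) - x) (fun r : {r // r ∈ J} => q ^ (r : ℕ)) := by
    funext k
    set m : ℤ := ν k - ((k : ℕ) + 1) - x with hm
    have hmcard : 1 ≤ m + J.card := by
      have h1 : ν ⟨N - 1, by omega⟩ ≤ ν k := hν (by
        show (k : ℕ) ≤ N - 1
        have := k.isLt; omega)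
      have h2 : ((k : ℕ) : ℤ) + 1 ≤ (N : ℤ) := by
        have := k.isLt; push_cast; omega
      omega
    rw [keyIdentity hq hq1 J m hmcard]
    show ∑ j : Fin N, V k j * tvec j = _
    have step1 : ∑ j : Fin N, V k j * tvec j
        = ∑ s ∈ Finset.range N, a k ^ s * tval s := by
      refine Finset.sum_bij' (fun (j : Fin N) _ => N - 1 - (j : ℕ))
        (fun s hs => (⟨N - 1 - s, by have := Finset.mem_range.mp hs; omega⟩ : Fin N))
        (fun j _ => Finset.mem_range.mpr (by
          show N - 1 - (j : ℕ) < N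
          have := j.isLt; omega))
        (fun s _ => Finset.mem_univ _) ?_ ?_ ?_
      · intro j _
        have := j.isLt
        apply Fin.ext
        show N - 1 - (N - 1 - (j : ℕ)) = (j : ℕ)
        omega
      · intro s hs
        have := Finset.mem_range.mp hs
        show N - 1 - (N - 1 - s) = s
        omega
      · intro j _
        rfl
    rw [step1, ← Finset.sum_subset hJ (by
      intro s _ hsJ
      simp [htval, if_neg hsJ])]
    refine Finset.sum_congr rfl fun s hs => ?_
    rw [htval]
    simp only [if_pos hs]
    rw [← mul_assoc]
    congr 1
    have h1 : a k ^ s = q ^ (e k * (s : ℤ)) := by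
      rw [ha, ← zpow_natCast (q ^ (e k)) s, ← zpow_mul]
    have h2 : ((q : ℝ) ^ (s : ℕ)) ^ m = q ^ ((s : ℤ) * m) := by
      rw [← zpow_natCast q s, ← zpow_mul]
    rw [h1, h2, ← zpow_add₀ hqne]
    congr 1
    rw [hm, he]
    ring
  have hpsi : ∀ i', qPsiFun N ν q J x i' = (V⁻¹.mulVec (V.mulVec tvec)) i' := by
    intro i'
    rw [hmul]
    rw [qPsiFun]
    show _ = ∑ j, V⁻¹ i' j * _
    exact Finset.sum_congr rfl fun j _ => mul_comm _ _
  have hfix : V⁻¹.mulVec (V.mulVec tvec) = tvec := by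
    rw [Matrix.mulVec_mulVec, Matrix.nonsing_inv_mul V (isUnit_iff_ne_zero.mpr hdet), Matrix.one_mulVec]
  have hval : qPsiFun N ν q J x i = tval (N - 1 - (i : ℕ)) := by
    rw [hpsi, hfix]
  constructor
  · intro hnot
    rw [hval, htval]
    simp [if_neg hnot]
  · intro hmem
    rw [hval, htval]
    simp only [if_pos hmem]
    have hcast : ((N - 1 - (i : ℕ) : ℕ) : ℤ) = (N : ℤ) - 1 - ((i : ℕ) : ℤ) := by
      have := i.isLt; omega
    rw [hcast]
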